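/- arXiv:0706.4281 — 4 statements merged into one kernel-verified Lean document; each statement's English description precedes it below -/
import Mathlib

section
/- Let ℜ = (S,(𝒦,𝒢),(X,ℬ),(ℱ,𝒯)) be a Riesz system, Z a uniform commutative monoid, and ℓ : ℱ → Z an ℰ-additive map with ℓ(0)=0. Then for each B∈ℬ, if g is a sequence in ℱ_B such that g_m and g_n are ℰ-separated for all m,n∈ℕ with m≠n, then every finite sum ∑_{j∈J} ℓ(g_j) (J a finite subset of ℕ) belongs to the image ℓ(ℱ_B). -/
open Filter Set Topology
open scoped Pointwise

universe u v w

/-- A member of `unif M`: a closed, translation-invariant, symmetric entourage of the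
uniform commutative monoid `M`. -/
def IsUnifEnt (M : Type*) [AddCommMonoid M] [UniformSpace M] (W : Set (M × M)) : Prop :=
  W ∈ uniformity M ∧ IsClosed W ∧
    (∀ p ∈ W, ∀ t : M, (p.1 + t, p.2 + t) ∈ W) ∧ ∀ p ∈ W, (p.2, p.1) ∈ W

/-- `f` is supported by `α` (written `f ≺ α`): `f` vanishes off some `κ ∈ 𝒦` with `κ ⊆ α`. -/
def SupportedBy {S : Type u} {X : Type v} [Zero X]
    (𝒦 : Set (Set S)) (f : S → X) (α : Set S) : Prop :=
  ∃ κ ∈ 𝒦, κ ⊆ α ∧ ∀ s ∉ κ, f s = 0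

/-- `f` equals `x` over `α`: `f` is identically `x` on some `γ ∈ 𝒢` containing `α`. -/
def EqualsOver {S : Type u} {X : Type v}
    (𝒢 : Set (Set S)) (f : S → X) (x : X) (α : Set S) : Prop :=
  ∃ γ ∈ 𝒢, α ⊆ γ ∧ ∀ s ∈ γ, f s = x

/-- `ℱ_B`: members of `ℱ` with range contained in `B`. -/
def FB {S : Type u} {X : Type v} (ℱ : Set (S → X)) (B : Set X) : Set (S → X) :=
  {f | f ∈ ℱ ∧ Set.range f ⊆ B}

/-- the `ℬ`-hull of `x`: intersection of all members of `ℬ` containing `x`. -/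
def BHull {X : Type v} (ℬ : Set (Set X)) (x : X) : Set X :=
  ⋂₀ {B | B ∈ ℬ ∧ x ∈ B}

/-- the `ℬ`-hull of a subset `A` of `X`. -/
def BHullS {X : Type v} (ℬ : Set (Set X)) (A : Set X) : Set X :=
  ⋂₀ {B | B ∈ ℬ ∧ A ⊆ B}

/-- A field of subsets of `S`. -/
def IsSetField {S : Type u} (ℰ : Set (Set S)) : Prop :=
  Set.univ ∈ ℰ ∧ (∀ A ∈ ℰ, Aᶜ ∈ ℰ) ∧ ∀ A ∈ ℰ, ∀ B ∈ ℰ, A ∪ B ∈ ℰ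

/-- `ℰ`: the smallest field of subsets of `S` containing `𝒦 ∪ 𝒢`. -/
def genField {S : Type u} (𝒦 𝒢 : Set (Set S)) : Set (Set S) :=
  ⋂₀ {ℰ | 𝒦 ∪ 𝒢 ⊆ ℰ ∧ IsSetField ℰ}

/-- A Riesz system `(S,(𝒦,𝒢),(X,ℬ),(ℱ,𝒯))` (Assumptions 2.3 of the paper). -/
structure RieszSystem {S : Type u} {X : Type v} [AddCommMonoid X] [UniformSpace X]
    (𝒦 𝒢 : Set (Set S)) (ℬ : Set (Set X)) (ℱ : Set (S → X))
    (𝒯 : Filter ((S → X) × (S → X))) : Prop where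
  K_empty : ∅ ∈ 𝒦
  K_union : ∀ κ₁ ∈ 𝒦, ∀ κ₂ ∈ 𝒦, κ₁ ∪ κ₂ ∈ 𝒦
  G_empty : ∅ ∈ 𝒢
  G_union : ∀ γ₁ ∈ 𝒢, ∀ γ₂ ∈ 𝒢, γ₁ ∪ γ₂ ∈ 𝒢
  G_inter : ∀ γ₁ ∈ 𝒢, ∀ γ₂ ∈ 𝒢, γ₁ ∩ γ₂ ∈ 𝒢
  KG_diff : ∀ κ ∈ 𝒦, ∀ γ ∈ 𝒢, κ \ γ ∈ 𝒦 ∧ γ \ κ ∈ 𝒢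
  KG_interpose : ∀ κ ∈ 𝒦, ∀ γ ∈ 𝒢, κ ⊆ γ →
      ∃ γ' ∈ 𝒢, ∃ κ' ∈ 𝒦, κ ⊆ γ' ∧ γ' ⊆ κ' ∧ κ' ⊆ γ
  X_add : UniformContinuous fun p : X × X => p.1 + p.2
  B_nonempty : ℬ.Nonempty
  B_inter : ∀ 𝒞 ⊆ ℬ, 𝒞.Nonempty → ⋂₀ 𝒞 ∈ ℬ
  B_zero : ∀ B ∈ ℬ, (0 : X) ∈ B
  B_add : ∀ B ∈ ℬ, ∀ B' ∈ ℬ, ∃ C ∈ ℬ, B + B' ⊆ C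
  B_cover : ∀ x : X, ∃ B ∈ ℬ, x ∈ B
  F_zero : (0 : S → X) ∈ ℱ
  F_add : ∀ f ∈ ℱ, ∀ g ∈ ℱ, f + g ∈ ℱ
  T_refl : ∀ T ∈ 𝒯, ∀ f ∈ ℱ, (f, f) ∈ T
  T_symm : ∀ T ∈ 𝒯, ∃ V ∈ 𝒯, ∀ f g : S → X, (f, g) ∈ V → (g, f) ∈ T
  T_comp : ∀ T ∈ 𝒯, ∃ V ∈ 𝒯, ∀ f g h : S → X, (f, g) ∈ V → (g, h) ∈ V → (f, h) ∈ T
  T_add : ∀ T ∈ 𝒯, ∃ V ∈ 𝒯, ∀ f f' g g' : S → X,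
      (f, f') ∈ V → (g, g') ∈ V → (f + g, f' + g') ∈ T
  F_range : ∀ f ∈ ℱ, ∃ B ∈ ℬ, Set.range f ⊆ B
  F_partble : ∀ f ∈ ℱ, ∀ W ∈ uniformity X, ∃ G : Finset (Set S), ↑G ⊆ 𝒢 ∧
      (⋃ γ ∈ G, γ) = Set.univ ∧ ∀ γ ∈ G, ∀ s ∈ γ, ∀ t ∈ γ, (f s, f t) ∈ W
  F_urysohn : ∀ κ ∈ 𝒦, ∀ γ ∈ 𝒢, κ ⊆ γ → ∀ x : X, ∃ f ∈ ℱ,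
      Set.range f ⊆ BHull ℬ x ∧ SupportedBy 𝒦 f γ ∧ EqualsOver 𝒢 f x κ
  F_ext : ∀ B ∈ ℬ, ∀ T ∈ 𝒯, ∃ U ∈ uniformity X, ∀ κ ∈ 𝒦, ∀ γ ∈ 𝒢, κ ⊆ γ →
      ∀ f ∈ FB ℱ B, ∀ g ∈ FB ℱ B, SupportedBy 𝒦 f γ → SupportedBy 𝒦 g γ →
      (∃ ω ∈ 𝒢, κ ⊆ ω ∧ ω ⊆ γ ∧ ∀ s ∈ ω, (f s, g s) ∈ U) →
      ∃ p ∈ FB ℱ B, ∃ q ∈ FB ℱ B, SupportedBy 𝒦 p (γ \ κ) ∧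
        SupportedBy 𝒦 q (γ \ κ) ∧ (f + p, g + q) ∈ T
  F_partunity : ∀ B ∈ ℬ, ∀ G : Finset (Set S), ↑G ⊆ 𝒢 → ∀ κ ∈ 𝒦, κ ⊆ (⋃ γ ∈ G, γ) →
      ∀ f ∈ FB ℱ B, ∃ g : Set S → (S → X),
        (∀ γ ∈ G, g γ ∈ FB ℱ B ∧ SupportedBy 𝒦 (g γ) γ) ∧
        (∀ J : Finset (Set S), J ⊆ G → (∑ γ ∈ J, g γ) ∈ FB ℱ B) ∧
        ∀ s ∈ κ, f s = ∑ γ ∈ G, g γ s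

/-- `f` and `g` are `ℰ`-separated. -/
def ESeparated {S : Type u} {X : Type v} [Zero X]
    (𝒦 𝒢 : Set (Set S)) (f g : S → X) : Prop :=
  ∃ E₁ ∈ genField 𝒦 𝒢, ∃ E₂ ∈ genField 𝒦 𝒢, Disjoint E₁ E₂ ∧
    SupportedBy 𝒦 f E₁ ∧ SupportedBy 𝒦 g E₂

/-- `ℓ` is `ℰ`-additive. -/
def EAdditive {S : Type u} {X : Type v} {Z : Type w} [AddCommMonoid X] [AddCommMonoid Z]
    (𝒦 𝒢 : Set (Set S)) (ℱ : Set (S → X)) (ℓ : (S → X) → Z) : Prop :=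
  ∀ f ∈ ℱ, ∀ g ∈ ℱ, ESeparated 𝒦 𝒢 f g → ℓ (f + g) = ℓ f + ℓ g

/-- `ℓ` is `s`-bounded over `ℬ`. -/
def SBounded {S : Type u} {X : Type v} {Z : Type w} [AddCommMonoid X]
    [AddCommMonoid Z] [UniformSpace Z]
    (𝒦 𝒢 : Set (Set S)) (ℬ : Set (Set X)) (ℱ : Set (S → X)) (ℓ : (S → X) → Z) : Prop :=
  ∀ B ∈ ℬ, ∀ W : Set (Z × Z), IsUnifEnt Z W → ∀ G : ℕ → Set S, (∀ n, G n ∈ 𝒢) →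
    (∀ m n : ℕ, m ≠ n → Disjoint (G m) (G n)) → ∃ m : ℕ, ∀ n > m,
      ∀ f ∈ FB ℱ B, ∀ g ∈ FB ℱ B, SupportedBy 𝒦 g (G n) → (ℓ f, ℓ (f + g)) ∈ W

/-- `ℓ` is uniformly continuous on `A` with respect to the uniformity `𝒯`. -/
def UContOn {S : Type u} {X : Type v} {Z : Type w} [UniformSpace Z]
    (𝒯 : Filter ((S → X) × (S → X))) (A : Set (S → X)) (ℓ : (S → X) → Z) : Prop :=
  ∀ W ∈ uniformity Z, ∃ T ∈ 𝒯, ∀ f ∈ A, ∀ g ∈ A, (f, g) ∈ T → (ℓ f, ℓ g) ∈ W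

/-- A relatively complete subset of a uniform space. -/
def RelComplete {Z : Type w} [UniformSpace Z] (A : Set Z) : Prop :=
  IsComplete (closure A)

/-- `ℓ` is a Riesz integral over the Riesz system `(S,(𝒦,𝒢),(X,ℬ),(ℱ,𝒯))`. -/
def RieszIntegral {S : Type u} {X : Type v} {Z : Type w} [AddCommMonoid X]
    [AddCommMonoid Z] [UniformSpace Z]
    (𝒦 𝒢 : Set (Set S)) (ℬ : Set (Set X)) (ℱ : Set (S → X))
    (𝒯 : Filter ((S → X) × (S → X))) (ℓ : (S → X) → Z) : Prop :=
  EAdditive 𝒦 𝒢 ℱ ℓ ∧ SBounded 𝒦 𝒢 ℬ ℱ ℓ ∧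
    ∀ B ∈ ℬ, UContOn 𝒯 (FB ℱ B) ℓ ∧ RelComplete (ℓ '' FB ℱ B)

/-- The members of a finite family of sets are pairwise disjoint. -/
def PairwiseDisjFinset {S : Type u} (K : Finset (Set S)) : Prop :=
  ∀ κ₁ ∈ K, ∀ κ₂ ∈ K, κ₁ ≠ κ₂ → Disjoint κ₁ κ₂

/-- `α` is `W`-small with respect to `(h, B)`. -/
def WSmall {S : Type u} {X : Type v} {Z : Type w} [AddCommMonoid X] [AddCommMonoid Z]
    (𝒦 𝒢 : Set (Set S)) (h : Set S → X → Z) (B : Set X)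
    (W : Set (Z × Z)) (α : Set S) : Prop :=
  ∃ γ ∈ 𝒢, α ⊆ γ ∧ ∀ K : Finset (Set S), ↑K ⊆ 𝒦 → PairwiseDisjFinset K →
    (∀ κ ∈ K, κ ⊆ γ) → ∀ x y : Set S → X, (∀ κ ∈ K, x κ ∈ B) → (∀ κ ∈ K, y κ ∈ B) →
      (∑ κ ∈ K, h κ (x κ), ∑ κ ∈ K, h κ (x κ + y κ)) ∈ W

/-- `α` is regular with respect to `(h, 𝒦, 𝒢, ℬ)`. -/
def RegularSet {S : Type u} {X : Type v} {Z : Type w} [AddCommMonoid X]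
    [AddCommMonoid Z] [UniformSpace Z]
    (𝒦 𝒢 : Set (Set S)) (ℬ : Set (Set X)) (h : Set S → X → Z) (α : Set S) : Prop :=
  ∀ B ∈ ℬ, ∀ V : Set (Z × Z), IsUnifEnt Z V →
    ∃ κ ∈ 𝒦, ∃ γ ∈ 𝒢, κ ⊆ α ∧ α ⊆ γ ∧ WSmall 𝒦 𝒢 h B V (γ \ κ)

/-- `R_h`: the family of regular sets of `h`. -/
def RSet {S : Type u} {X : Type v} {Z : Type w} [AddCommMonoid X]
    [AddCommMonoid Z] [UniformSpace Z]
    (𝒦 𝒢 : Set (Set S)) (ℬ : Set (Set X)) (h : Set S → X → Z) : Set (Set S) :=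
  {α | RegularSet 𝒦 𝒢 ℬ h α}

/-- `h` is uniformly partition continuous with respect to `(𝒦,𝒢,ℬ)`. -/
def UPartCont {S : Type u} {X : Type v} {Z : Type w} [AddCommMonoid X] [UniformSpace X]
    [AddCommMonoid Z] [UniformSpace Z]
    (𝒦 𝒢 : Set (Set S)) (ℬ : Set (Set X)) (h : Set S → X → Z) : Prop :=
  ∀ W : Set (Z × Z), IsUnifEnt Z W → ∀ B ∈ ℬ, ∃ U ∈ uniformity X,
    ∀ R : Finset (Set S), ↑R ⊆ RSet 𝒦 𝒢 ℬ h → PairwiseDisjFinset R →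
    ∀ x y : Set S → X, (∀ ρ ∈ R, x ρ ∈ B ∧ y ρ ∈ B ∧ (x ρ, y ρ) ∈ U) →
      (∑ ρ ∈ R, h ρ (x ρ), ∑ ρ ∈ R, h ρ (y ρ)) ∈ W

/-- `h` is `s`-bounded with respect to `(𝒦,𝒢,ℬ)`. -/
def MSBounded {S : Type u} {X : Type v} {Z : Type w} [AddCommMonoid X]
    [AddCommMonoid Z] [UniformSpace Z]
    (𝒦 𝒢 : Set (Set S)) (ℬ : Set (Set X)) (h : Set S → X → Z) : Prop :=
  ∀ B ∈ ℬ, ∀ α : ℕ → Set S, (∀ n, α n ∈ RSet 𝒦 𝒢 ℬ h) →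
    (∀ m n : ℕ, m ≠ n → Disjoint (α m) (α n)) → ∀ V : Set (Z × Z), IsUnifEnt Z V →
      ∃ m : ℕ, ∀ n > m, WSmall 𝒦 𝒢 h B V (α n)

/-- `𝒱(h,𝒦,𝒢,B)`: all finite sums `∑_{ρ∈R} x_ρ.h(ρ)`. -/
def VSums {S : Type u} {X : Type v} {Z : Type w} [AddCommMonoid X]
    [AddCommMonoid Z] [UniformSpace Z]
    (𝒦 𝒢 : Set (Set S)) (ℬ : Set (Set X)) (h : Set S → X → Z) (B : Set X) : Set Z :=
  {z | ∃ R : Finset (Set S), ↑R ⊆ RSet 𝒦 𝒢 ℬ h ∧ PairwiseDisjFinset R ∧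
    ∃ x : Set S → X, (∀ ρ ∈ R, x ρ ∈ B) ∧ z = ∑ ρ ∈ R, h ρ (x ρ)}

/-- `z` is the limit of the net `(F κ x : κ ∈ 𝒦, κ ⊆ γ)` directed by inclusion. -/
def KBelowLim {S : Type u} {X : Type v} {Z : Type w} [TopologicalSpace Z]
    (𝒦 : Set (Set S)) (γ : Set S) (F : Set S → X → Z) (x : X) (z : Z) : Prop :=
  Tendsto (fun κ : {κ : Set S // κ ∈ 𝒦 ∧ κ ⊆ γ} => F κ.1 x) atTop (nhds z)

/-- `z` is the limit of the net `(F γ' x : γ' ∈ 𝒢, α ⊆ γ')` directed by reverse inclusion. -/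
def GAboveLim {S : Type u} {X : Type v} {Z : Type w} [TopologicalSpace Z]
    (𝒢 : Set (Set S)) (α : Set S) (F : Set S → X → Z) (x : X) (z : Z) : Prop :=
  Tendsto (fun γ : {γ : Set S // γ ∈ 𝒢 ∧ α ⊆ γ} => F γ.1 x) atBot (nhds z)

/-- `h` is a Riesz measure over `(𝒦,𝒢,ℬ)`. -/
def RieszMeasure {S : Type u} {X : Type v} {Z : Type w} [AddCommMonoid X] [UniformSpace X]
    [AddCommMonoid Z] [UniformSpace Z]
    (𝒦 𝒢 : Set (Set S)) (ℬ : Set (Set X)) (h : Set S → X → Z) : Prop :=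
  𝒢 ⊆ RSet 𝒦 𝒢 ℬ h ∧
  IsSetField (RSet 𝒦 𝒢 ℬ h) ∧
  (∀ ρ₁ ∈ RSet 𝒦 𝒢 ℬ h, ∀ ρ₂ ∈ RSet 𝒦 𝒢 ℬ h, Disjoint ρ₁ ρ₂ →
      ∀ x : X, h (ρ₁ ∪ ρ₂) x = h ρ₁ x + h ρ₂ x) ∧
  (∀ γ ∈ 𝒢, ∀ x : X, KBelowLim 𝒦 γ h x (h γ x)) ∧
  (∀ α : Set S, ∀ x : X, GAboveLim 𝒢 α h x (h α x)) ∧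
  UPartCont 𝒦 𝒢 ℬ h ∧ MSBounded 𝒦 𝒢 ℬ h ∧
  ∀ B ∈ ℬ, RelComplete (VSums 𝒦 𝒢 ℬ h B)

/-- The finite disjoint family `R` refines `Q`. -/
def RefinesF {S : Type u} (R Q : Finset (Set S)) : Prop :=
  ∀ ρ ∈ R, ∃ q ∈ Q, ρ ⊆ q

/-- `R` is a finite disjoint partition of `E` by sets regular for `h`. -/
def IsPartitionOf {S : Type u} {X : Type v} {Z : Type w} [AddCommMonoid X]
    [AddCommMonoid Z] [UniformSpace Z]
    (𝒦 𝒢 : Set (Set S)) (ℬ : Set (Set X)) (h : Set S → X → Z)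
    (R : Finset (Set S)) (E : Set S) : Prop :=
  ↑R ⊆ RSet 𝒦 𝒢 ℬ h ∧ PairwiseDisjFinset R ∧ (⋃ ρ ∈ R, ρ) = E

/-- `z = ∫_E f.dμ`. -/
def IsIntegralOf {S : Type u} {X : Type v} {Z : Type w} [AddCommMonoid X]
    [AddCommMonoid Z] [UniformSpace Z]
    (𝒦 𝒢 : Set (Set S)) (ℬ : Set (Set X)) (μ : Set S → X → Z)
    (E : Set S) (f : S → X) (z : Z) : Prop :=
  ∀ V ∈ nhds z, ∃ Q : Finset (Set S), IsPartitionOf 𝒦 𝒢 ℬ μ Q E ∧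
    ∀ R : Finset (Set S), IsPartitionOf 𝒦 𝒢 ℬ μ R E → RefinesF R Q →
      ∀ s : Set S → S, (∀ ρ ∈ R, s ρ ∈ ρ) → (∑ ρ ∈ R, μ ρ (f (s ρ))) ∈ V

/-- `ℱ*(x,κ,γ,B)`. -/
def FStar {S : Type u} {X : Type v} [Zero X]
    (𝒦 𝒢 : Set (Set S)) (ℱ : Set (S → X)) (x : X) (κ γ : Set S) (B : Set X) :
    Set (S → X) :=
  {f | f ∈ FB ℱ B ∧ EqualsOver 𝒢 f x κ ∧ SupportedBy 𝒦 f γ}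

/-- `τ` is the set function `τ_ℓ` generated by `ℓ` on `𝒦`. -/
def IsTau {S : Type u} {X : Type v} {Z : Type w} [AddCommMonoid X] [UniformSpace Z]
    (𝒦 𝒢 : Set (Set S)) (ℬ : Set (Set X)) (ℱ : Set (S → X))
    (ℓ : (S → X) → Z) (τ : Set S → X → Z) : Prop :=
  ∀ κ ∈ 𝒦, ∀ x : X, ∀ V ∈ nhds (τ κ x), ∃ β ∈ 𝒢, κ ⊆ β ∧
    ℓ '' FStar 𝒦 𝒢 ℱ x κ β (BHull ℬ x) ⊆ V

/-- `ξ = ξ_ℓ` is the pointwise limit of `τ = τ_ℓ` over `𝒦⁻(γ)`. -/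
def IsXi {S : Type u} {X : Type v} {Z : Type w} [TopologicalSpace Z]
    (𝒦 𝒢 : Set (Set S)) (τ ξ : Set S → X → Z) : Prop :=
  ∀ γ ∈ 𝒢, ∀ x : X, KBelowLim 𝒦 γ τ x (ξ γ x)

/-- `ν = ν_ℓ` is the pointwise limit of `ξ = ξ_ℓ` over `𝒢⁺(α)`. -/
def IsNu {S : Type u} {X : Type v} {Z : Type w} [TopologicalSpace Z]
    (𝒢 : Set (Set S)) (ξ ν : Set S → X → Z) : Prop :=
  ∀ α : Set S, ∀ x : X, GAboveLim 𝒢 α ξ x (ν α x)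

/-- `S(W,B,ℓ)`. -/
def SWB {S : Type u} {X : Type v} {Z : Type w} [AddCommMonoid X]
    (𝒦 𝒢 : Set (Set S)) (ℱ : Set (S → X)) (ℓ : (S → X) → Z)
    (W : Set (Z × Z)) (B : Set X) : Set (Set S) :=
  {γ | γ ∈ 𝒢 ∧ ∀ f ∈ FB ℱ B, ∀ g ∈ FB ℱ B, SupportedBy 𝒦 g γ → (ℓ f, ℓ (f + g)) ∈ W}

/-- `ℓ` has the Hammerstein property relative to `ℰ`. -/
def Hammerstein {S : Type u} {X : Type v} {Z : Type w} [AddCommMonoid X] [AddCommMonoid Z]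
    (𝒦 𝒢 : Set (Set S)) (ℱ : Set (S → X)) (ℓ : (S → X) → Z) : Prop :=
  ∀ f ∈ ℱ, ∀ g₁ ∈ ℱ, ∀ g₂ ∈ ℱ, ESeparated 𝒦 𝒢 g₁ g₂ →
    ℓ (f + g₁ + g₂) + ℓ f = ℓ (f + g₁) + ℓ (f + g₂)

/-- `ℓ` is quasi-additive. -/
def QuasiAdditive {S : Type u} {X : Type v} {Z : Type w} [AddCommMonoid X]
    [AddCommMonoid Z] [UniformSpace Z]
    (ℬ : Set (Set X)) (ℱ : Set (S → X)) (ℓ : (S → X) → Z) : Prop :=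
  ∀ W : Set (Z × Z), IsUnifEnt Z W → ∀ B ∈ ℬ, ∃ V : Set (Z × Z), IsUnifEnt Z V ∧
    ∀ f ∈ FB ℱ B, ∀ g ∈ FB ℱ B, ((0 : Z), ℓ g) ∈ V → (ℓ f, ℓ (f + g)) ∈ W

/-- A perfect subset of `Z`: any function whose finite partial sums all lie in the set
is summable. -/
def PerfectSet {Z : Type w} [AddCommMonoid Z] [TopologicalSpace Z] (A : Set Z) : Prop :=
  ∀ ⦃ι : Type w⦄ (g : ι → Z), (∀ J : Finset ι, ∑ i ∈ J, g i ∈ A) → Summable g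

/-- A quasi-perfect subset of `Z`: any function whose finite partial sums all lie in the
set has a Cauchy net of finite partial sums. -/
def QuasiPerfectSet {Z : Type w} [AddCommMonoid Z] [UniformSpace Z] (A : Set Z) : Prop :=
  ∀ ⦃ι : Type w⦄ (g : ι → Z), (∀ J : Finset ι, ∑ i ∈ J, g i ∈ A) →
    Cauchy (Filter.map (fun J : Finset ι => ∑ i ∈ J, g i) Filter.atTop)

/-- `α` is `U`-small with respect to `(ℓ, B)`. -/
def USmallOp {S : Type u}{X : Type v} {Z : Type w} [AddCommMonoid X] [Zero X]
    (𝒦 : Set (Set S)) (ℱ : Set (S → X)) (ℓ : (S → X) → Z) (B : Set X)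
    (U : Set (Z × Z)) (α : Set S) : Prop :=
  ∀ f ∈ FB ℱ B, ∀ g ∈ FB ℱ B, SupportedBy 𝒦 g α → (ℓ f, ℓ (f + g)) ∈ U

/-- `ℓ` is `𝒢`-bounded. -/
def GBounded {S : Type u} {X : Type v} {Z : Type w} [AddCommMonoid X]
    [AddCommMonoid Z] [UniformSpace Z]
    (𝒦 𝒢 : Set (Set S)) (ℬ : Set (Set X)) (ℱ : Set (S → X)) (ℓ : (S → X) → Z) : Prop :=
  ∀ U : Set (Z × Z), IsUnifEnt Z U → ∀ B ∈ ℬ, ∀ K ∈ 𝒦, ∀ 𝒢' ⊆ 𝒢, K ⊆ ⋃₀ 𝒢' →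
    ∃ H : Finset (Set S), ↑H ⊆ 𝒢' ∧ USmallOp 𝒦 ℱ ℓ B U (K \ ⋃ γ ∈ H, γ)

/-- `ℬ₀` (Notation 2.2). -/
def B0 {X : Type v} [AddCommMonoid X] (ℬ : Set (Set X)) : Set (Set X) :=
  ⋂₀ {ℋ | ℋ ⊆ ℬ ∧ (∀ 𝒞 ⊆ ℋ, 𝒞.Nonempty → ⋂₀ 𝒞 ∈ ℋ) ∧ ⋂₀ ℋ = {0} ∧
      (∀ x : X, BHull ℬ x ∈ ℋ) ∧ ∀ H₁ ∈ ℋ, ∀ H₂ ∈ ℋ, BHullS ℬ (H₁ + H₂) ∈ ℋ}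

/-- `ℱ₀` (Notation 2.2). -/
def F0 {S : Type u} {X : Type v} [AddCommMonoid X]
    (ℬ : Set (Set X)) (ℱ : Set (S → X)) : Set (S → X) :=
  {f | f ∈ ℱ ∧ ∃ B ∈ B0 ℬ, Set.range f ⊆ B}

/-- The uniformity of uniform convergence on `S`, as a filter on `(S → X) × (S → X)`. -/
def UnifConvFilter (S : Type u) (X : Type v) [UniformSpace X] :
    Filter ((S → X) × (S → X)) :=
  ⨅ V ∈ uniformity X, Filter.principal {p : (S → X) × (S → X) | ∀ s : S, (p.1 s, p.2 s) ∈ V}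

/-- The additional conditions of Remark 2.5.1 on a Riesz system. -/
structure Remark251 {S : Type u} {X : Type v} [TopologicalSpace S]
    [AddCommGroup X] [Module ℝ X] [UniformSpace X]
    (𝒦 𝒢 : Set (Set S)) (ℬ : Set (Set X)) (ℱ : Set (S → X))
    (𝒯 : Filter ((S → X) × (S → X))) : Prop where
  K_closed : ∀ κ ∈ 𝒦, IsClosed κ
  G_open : ∀ γ ∈ 𝒢, IsOpen γ
  B_def : ℬ = {B : Set X | IsClosed B ∧ TotallyBounded B}
  F_sub : ∀ f ∈ ℱ, Continuous f ∧ TotallyBounded (Set.range f)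
  F_module : ∀ φ : S → ℝ, Continuous φ → TotallyBounded (Set.range φ) →
      ∀ f ∈ ℱ, (fun s => φ s • f s) ∈ ℱ
  F_tensor : ∀ x : X, ∀ φ : S → ℝ, Continuous φ → TotallyBounded (Set.range φ) →
      (∃ κ ∈ 𝒦, ∀ s ∉ κ, φ s = 0) → (fun s => φ s • x) ∈ ℱ
  T_coarser : UnifConvFilter S X ≤ 𝒯

/-- `A` is a bounded subset of the "topological vector space" `(ℱ,𝒯)`:
it is absorbed by every `𝒯`-neighbourhood of `0`. -/
def FBddIn {S : Type u} {X : Type v} [AddCommGroup X] [Module ℝ X]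
    (𝒯 : Filter ((S → X) × (S → X))) (A : Set (S → X)) : Prop :=
  ∀ T ∈ 𝒯, ∃ r : ℝ, 0 < r ∧ ∀ f ∈ A, ∀ c : ℝ, |c| ≤ r → ((0 : S → X), c • f) ∈ T

section Aux

variable {S : Type u} {X : Type v} [AddCommMonoid X] [UniformSpace X]
variable {𝒦 𝒢 : Set (Set S)} {ℬ : Set (Set X)} {ℱ : Set (S → X)}
variable {𝒯 : Filter ((S → X) × (S → X))}

lemma genField_mem_iff {E : Set S} :
    E ∈ genField 𝒦 𝒢 ↔ ∀ ℰ : Set (Set S), 𝒦 ∪ 𝒢 ⊆ ℰ → IsSetField ℰ → E ∈ ℰ := by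
  simp only [genField, Set.mem_sInter, Set.mem_setOf_eq, and_imp]

lemma K_mem_genField {κ : Set S} (hκ : κ ∈ 𝒦) : κ ∈ genField 𝒦 𝒢 :=
  genField_mem_iff.2 fun _ h _ => h (Or.inl hκ)

lemma G_mem_genField {γ : Set S} (hγ : γ ∈ 𝒢) : γ ∈ genField 𝒦 𝒢 :=
  genField_mem_iff.2 fun _ h _ => h (Or.inr hγ)

lemma univ_mem_genField : (Set.univ : Set S) ∈ genField 𝒦 𝒢 :=
  genField_mem_iff.2 fun _ _ hf => hf.1

lemma compl_mem_genField {E : Set S} (hE : E ∈ genField 𝒦 𝒢) : Eᶜ ∈ genField 𝒦 𝒢 :=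
  genField_mem_iff.2 fun ℰ h hf => hf.2.1 E (genField_mem_iff.1 hE ℰ h hf)

lemma union_mem_genField {E F : Set S} (hE : E ∈ genField 𝒦 𝒢)
    (hF : F ∈ genField 𝒦 𝒢) : E ∪ F ∈ genField 𝒦 𝒢 :=
  genField_mem_iff.2 fun ℰ h hf =>
    hf.2.2 E (genField_mem_iff.1 hE ℰ h hf) F (genField_mem_iff.1 hF ℰ h hf)

lemma inter_mem_genField {E F : Set S} (hE : E ∈ genField 𝒦 𝒢)
    (hF : F ∈ genField 𝒦 𝒢) : E ∩ F ∈ genField 𝒦 𝒢 := by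
  have : E ∩ F = (Eᶜ ∪ Fᶜ)ᶜ := by
    simp [Set.compl_union]
  rw [this]
  exact compl_mem_genField (union_mem_genField (compl_mem_genField hE) (compl_mem_genField hF))

lemma empty_mem_genField : (∅ : Set S) ∈ genField 𝒦 𝒢 := by
  have : (∅ : Set S) = (Set.univ : Set S)ᶜ := by simp
  rw [this]; exact compl_mem_genField univ_mem_genField

lemma finset_biUnion_mem_G (hRS : RieszSystem 𝒦 𝒢 ℬ ℱ 𝒯) :
    ∀ G : Finset (Set S), ↑G ⊆ 𝒢 → (⋃ γ ∈ G, γ) ∈ 𝒢 := by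
  classical
  intro G
  induction G using Finset.induction_on with
  | empty => intro _; simpa using hRS.G_empty
  | @insert γ G hγG IH =>
      intro hsub
      rw [Finset.set_biUnion_insert]
      exact hRS.G_union γ (hsub (by simp)) _
        (IH fun x hx => hsub (by simp [hx]))

lemma univ_mem_G (hRS : RieszSystem 𝒦 𝒢 ℬ ℱ 𝒯) : (Set.univ : Set S) ∈ 𝒢 := by
  obtain ⟨G, hG, hcov, -⟩ :=
    hRS.F_partble 0 hRS.F_zero Set.univ Filter.univ_mem
  have := finset_biUnion_mem_G hRS G hG
  rwa [hcov] at this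

lemma K_inter_mem (hRS : RieszSystem 𝒦 𝒢 ℬ ℱ 𝒯) {κ₁ κ₂ : Set S}
    (h₁ : κ₁ ∈ 𝒦) (h₂ : κ₂ ∈ 𝒦) : κ₁ ∩ κ₂ ∈ 𝒦 := by
  have hγ : Set.univ \ κ₂ ∈ 𝒢 := (hRS.KG_diff κ₂ h₂ Set.univ (univ_mem_G hRS)).2
  have h := (hRS.KG_diff κ₁ h₁ _ hγ).1
  have : κ₁ \ (Set.univ \ κ₂) = κ₁ ∩ κ₂ := by
    ext s; by_cases h : s ∈ κ₂ <;> simp [h]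
  rwa [this] at h

lemma ESeparated_add (hRS : RieszSystem 𝒦 𝒢 ℬ ℱ 𝒯) {f g h : S → X}
    (h1 : ESeparated 𝒦 𝒢 f g) (h2 : ESeparated 𝒦 𝒢 f h) :
    ESeparated 𝒦 𝒢 f (g + h) := by
  obtain ⟨E₁, hE₁, E₂, hE₂, hd, ⟨κ₁, hκ₁, hκ₁E, hv₁⟩, ⟨κ₂, hκ₂, hκ₂E, hvg⟩⟩ := h1
  obtain ⟨F₁, hF₁, F₂, hF₂, hd', ⟨μ₁, hμ₁, hμ₁F, hv₂⟩, ⟨μ₂, hμ₂, hμ₂F, hvh⟩⟩ := h2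
  refine ⟨E₁ ∩ F₁, inter_mem_genField hE₁ hF₁, E₂ ∪ F₂, union_mem_genField hE₂ hF₂,
    ?_, ⟨κ₁ ∩ μ₁, K_inter_mem hRS hκ₁ hμ₁, Set.inter_subset_inter hκ₁E hμ₁F, ?_⟩,
    ⟨κ₂ ∪ μ₂, hRS.K_union κ₂ hκ₂ μ₂ hμ₂, Set.union_subset_union hκ₂E hμ₂F, ?_⟩⟩
  · rw [Set.disjoint_union_right]
    exact ⟨hd.mono_left Set.inter_subset_left, hd'.mono_left Set.inter_subset_right⟩
  · intro s hs
    rw [Set.mem_inter_iff, not_and_or] at hs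
    rcases hs with h | h
    · exact hv₁ s h
    · exact hv₂ s h
  · intro s hs
    rw [Set.mem_union, not_or] at hs
    show g s + h s = 0
    rw [hvg s hs.1, hvh s hs.2, add_zero]

end Aux

theorem stmt7 {S : Type u} {X : Type v} {Z : Type w}
    [AddCommMonoid X] [UniformSpace X] [T2Space X]
    [AddCommMonoid Z] [UniformSpace Z] [T2Space Z]
    (hZadd : UniformContinuous fun p : Z × Z => p.1 + p.2)
    {𝒦 𝒢 : Set (Set S)} {ℬ : Set (Set X)} {ℱ : Set (S → X)}
    {𝒯 : Filter ((S → X) × (S → X))}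
    (hRS : RieszSystem 𝒦 𝒢 ℬ ℱ 𝒯)
    (ℓ : (S → X) → Z) (hℓ0 : ℓ 0 = 0) (hadd : EAdditive 𝒦 𝒢 ℱ ℓ) :
    ∀ B ∈ ℬ, ∀ g : ℕ → (S → X), (∀ n, g n ∈ FB ℱ B) →
      (∀ m n : ℕ, m ≠ n → ESeparated 𝒦 𝒢 (g m) (g n)) →
      ∀ J : Finset ℕ, (∑ j ∈ J, ℓ (g j)) ∈ ℓ '' FB ℱ B := by
  intro B hB g hg hsep J
  -- each g n has a 𝒦-support
  have hsupp : ∀ n, ∃ κ ∈ 𝒦, ∀ s ∉ κ, g n s = 0 := by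
    intro n
    obtain ⟨E₁, -, E₂, -, -, ⟨κ, hκ, -, hv⟩, -⟩ := hsep n (n + 1) (by omega)
    exact ⟨κ, hκ, hv⟩
  -- the partial sums are in ℱ
  have hF : ∀ J : Finset ℕ, (∑ j ∈ J, g j) ∈ ℱ := by
    intro J
    induction J using Finset.induction_on with
    | empty => simpa using hRS.F_zero
    | @insert i J hi IH =>
        rw [Finset.sum_insert hi]
        exact hRS.F_add _ (hg i).1 _ IH
  -- pointwise, at most one g j is nonzero
  have hzero : ∀ m n : ℕ, ∀ s : S, m ≠ n → g m s ≠ 0 → g n s = 0 := by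
    intro m n s hmn hms
    obtain ⟨E₁, -, E₂, -, hd, ⟨κ₁, -, hκ₁E, hv₁⟩, ⟨κ₂, -, hκ₂E, hv₂⟩⟩ := hsep m n hmn
    have hsκ₁ : s ∈ κ₁ := by
      by_contra h
      exact hms (hv₁ s h)
    have : s ∉ κ₂ := fun h => hd.ne_of_mem (hκ₁E hsκ₁) (hκ₂E h) rfl
    exact hv₂ s this
  -- the partial sums have range in B
  have hrange : ∀ J : Finset ℕ, Set.range (∑ j ∈ J, g j) ⊆ B := by
    intro J
    rintro _ ⟨s, rfl⟩
    rw [Finset.sum_apply]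
    by_cases hex : ∃ m ∈ J, g m s ≠ 0
    · obtain ⟨m, hm, hms⟩ := hex
      rw [Finset.sum_eq_single_of_mem m hm
        (fun j _ hjm => hzero m j s (Ne.symm hjm) hms)]
      exact (hg m).2 (Set.mem_range_self s)
    · push_neg at hex
      rw [Finset.sum_eq_zero hex]
      exact hRS.B_zero B hB
  -- separation of a single g i from partial sums over J with i ∉ J
  have hsepSum : ∀ i : ℕ, ∀ J : Finset ℕ, i ∉ J →
      ESeparated 𝒦 𝒢 (g i) (∑ j ∈ J, g j) := by
    intro i J
    induction J using Finset.induction_on with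
    | empty =>
        intro _
        rw [Finset.sum_empty]
        obtain ⟨κ, hκ, hv⟩ := hsupp i
        exact ⟨Set.univ, univ_mem_genField, ∅, empty_mem_genField,
          Set.disjoint_empty _, ⟨κ, hκ, Set.subset_univ _, hv⟩,
          ⟨∅, hRS.K_empty, subset_rfl, fun _ _ => rfl⟩⟩
    | @insert j J hj IH =>
        intro hiJ
        rw [Finset.mem_insert, not_or] at hiJ
        rw [Finset.sum_insert hj]
        exact ESeparated_add hRS (hsep i j hiJ.1) (IH hiJ.2)
  -- additivity over finite sums
  have hsum : ∀ J : Finset ℕ, ℓ (∑ j ∈ J, g j) = ∑ j ∈ J, ℓ (g j) := by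
    intro J
    induction J using Finset.induction_on with
    | empty => simpa using hℓ0
    | @insert i J hi IH =>
        rw [Finset.sum_insert hi, Finset.sum_insert hi,
          hadd (g i) (hg i).1 _ (hF J) (hsepSum i J hi), IH]
  exact ⟨∑ j ∈ J, g j, ⟨hF J, hrange J⟩, hsum J⟩
end

section
/- Let ℜ = (S,(𝒦,𝒢),(X,ℬ),(ℱ,𝒯)) be a Riesz system in which Z and ℱ are topological vector spaces, every ℱ_B (B∈ℬ) is a bounded subset of ℱ, and every bounded subset of Z is relatively complete and perfect. Then every continuous linear map ℓ : ℱ → Z is a Riesz integral over ℜ. -/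
open Filter Set Topology
open scoped Pointwise

universe u v w

theorem stmt9 {S : Type u} {X : Type v} {Z : Type w}
    [AddCommGroup X] [Module ℝ X] [UniformSpace X] [T2Space X]
    [AddCommGroup Z] [Module ℝ Z] [UniformSpace Z] [IsUniformAddGroup Z]
    [ContinuousSMul ℝ Z] [T2Space Z]
    {𝒦 𝒢 : Set (Set S)} {ℬ : Set (Set X)} {ℱ : Set (S → X)}
    {𝒯 : Filter ((S → X) × (S → X))}
    (hRS : RieszSystem 𝒦 𝒢 ℬ ℱ 𝒯)
    (hFsmul : ∀ c : ℝ, ∀ f ∈ ℱ, c • f ∈ ℱ)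
    (hFBbd : ∀ B ∈ ℬ, FBddIn 𝒯 (FB ℱ B))
    (hZbd : ∀ A : Set Z, Bornology.IsVonNBounded ℝ A → RelComplete A ∧ PerfectSet A)
    (ℓ : (S → X) → Z)
    (hlin_add : ∀ f ∈ ℱ, ∀ g ∈ ℱ, ℓ (f + g) = ℓ f + ℓ g)
    (hlin_smul : ∀ c : ℝ, ∀ f ∈ ℱ, ℓ (c • f) = c • ℓ f)
    (hcont : ∀ f ∈ ℱ, ∀ V ∈ nhds (ℓ f), ∃ T ∈ 𝒯, ∀ g ∈ ℱ, (f, g) ∈ T → ℓ g ∈ V) :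
    RieszIntegral 𝒦 𝒢 ℬ ℱ 𝒯 ℓ := by
  classical
  have hl0 : ℓ 0 = 0 := by
    have h := hlin_add 0 hRS.F_zero 0 hRS.F_zero
    rw [add_zero] at h
    exact (left_eq_add.mp h)
  -- boundedness of the image of FB under ℓ
  have himgbd : ∀ B ∈ ℬ, Bornology.IsVonNBounded ℝ (ℓ '' FB ℱ B) := by
    intro B hB V hV
    obtain ⟨T, hT, hTV⟩ := hcont 0 hRS.F_zero V (by rwa [hl0])
    obtain ⟨r, hr, hrT⟩ := hFBbd B hB T hT
    rw [absorbs_iff_norm]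
    refine ⟨r⁻¹, ?_⟩
    intro c hc z hz
    obtain ⟨f, hf, rfl⟩ := hz
    have hc0 : c ≠ 0 := by
      intro h
      rw [h, norm_zero] at hc
      exact absurd hc (not_le.mpr (by positivity))
    have hcinv : |c⁻¹| ≤ r := by
      rw [abs_inv]
      rw [inv_le_comm₀ (abs_pos.mpr hc0) hr]
      calc r⁻¹ ≤ ‖c‖ := hc
        _ = |c| := rfl
    have h1 : ((0 : S → X), c⁻¹ • f) ∈ T := hrT f hf c⁻¹ hcinv
    have h2 : ℓ (c⁻¹ • f) ∈ V := hTV _ (hFsmul c⁻¹ f hf.1) h1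
    rw [hlin_smul c⁻¹ f hf.1] at h2
    have : ℓ f = c • (c⁻¹ • ℓ f) := by
      rw [smul_smul, mul_inv_cancel₀ hc0, one_smul]
    rw [this]
    exact Set.smul_mem_smul_set h2
  refine ⟨?_, ?_, ?_⟩
  · -- E-additive
    intro f hf g hg _
    exact hlin_add f hf g hg
  · -- s-bounded
    intro B hB W hW G hG hGdisj
    have hperf : PerfectSet (ℓ '' FB ℱ B) := (hZbd _ (himgbd B hB)).2
    by_contra hcon
    push_neg at hcon
    choose nf hnf ff hff gf hgf hsupp hnw using hcon
    set ms : ℕ → ℕ := fun k => Nat.rec (nf 0) (fun _ prev => nf prev) k with hms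
    have hms_succ : ∀ k, ms (k + 1) = nf (ms k) := fun k => rfl
    have hms_mono : StrictMono ms := by
      apply strictMono_nat_of_lt_succ
      intro k
      rw [hms_succ]
      exact hnf (ms k)
    set gs : ℕ → (S → X) := fun k => gf (ms k) with hgs
    have hgsFB : ∀ k, gs k ∈ FB ℱ B := fun k => hgf (ms k)
    have hvanish : ∀ k s, gs k s ≠ 0 → s ∈ G (ms (k + 1)) := by
      intro k s hne
      obtain ⟨κ, _, hκsub, hκ0⟩ := hsupp (ms k)
      rw [hms_succ]
      by_contra hs
      exact hne (hκ0 s (fun hsk => hs (hκsub hsk)))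
    have hsumFB : ∀ J : Finset ℕ, (∑ k ∈ J, gs k) ∈ FB ℱ B := by
      intro J
      constructor
      · exact Finset.sum_induction gs (· ∈ ℱ) (fun a b ha hb => hRS.F_add a ha b hb)
          hRS.F_zero (fun k _ => (hgsFB k).1)
      · rintro x ⟨s, rfl⟩
        rw [Finset.sum_apply]
        by_cases hex : ∃ k ∈ J, gs k s ≠ 0
        · obtain ⟨k₀, hk₀J, hk₀⟩ := hex
          have hsum : ∑ k ∈ J, gs k s = gs k₀ s := by
            refine Finset.sum_eq_single_of_mem k₀ hk₀J ?_
            intro k hkJ hkne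
            by_contra hk
            have h1 : s ∈ G (ms (k + 1)) := hvanish k s hk
            have h2 : s ∈ G (ms (k₀ + 1)) := hvanish k₀ s hk₀
            have hne : ms (k + 1) ≠ ms (k₀ + 1) := fun h =>
              hkne (Nat.succ_injective (hms_mono.injective h))
            exact Set.disjoint_left.mp (hGdisj _ _ hne) h1 h2
          rw [hsum]
          exact (hgsFB k₀).2 ⟨s, rfl⟩
        · push_neg at hex
          rw [Finset.sum_eq_zero hex]
          exact hRS.B_zero B hB
    have hlsum : ∀ J : Finset ℕ, ℓ (∑ k ∈ J, gs k) = ∑ k ∈ J, ℓ (gs k) := by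
      intro J
      induction J using Finset.cons_induction with
      | empty => simpa using hl0
      | cons a J ha IH =>
        rw [Finset.sum_cons, Finset.sum_cons,
          hlin_add _ (hgsFB a).1 _ (hsumFB J).1, IH]
    have hps : ∀ J : Finset (ULift.{w} ℕ), ∑ i ∈ J, ℓ (gs i.down) ∈ ℓ '' FB ℱ B := by
      intro J
      have hinj : ∀ x ∈ J, ∀ y ∈ J, ULift.down x = ULift.down y → x = y :=
        fun x _ y _ h => ULift.down_injective h
      rw [← Finset.sum_image (f := fun k => ℓ (gs k)) (g := ULift.down) hinj, ← hlsum]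
      exact ⟨_, hsumFB _, rfl⟩
    have hsummable : Summable (fun k : ℕ => ℓ (gs k)) := by
      have h := hperf (fun i : ULift.{w} ℕ => ℓ (gs i.down)) hps
      exact (Equiv.ulift.summable_iff (f := fun k : ℕ => ℓ (gs k))).mp h
    have hball : {z : Z | ((0 : Z), z) ∈ W} ∈ nhds (0 : Z) := mem_nhds_left 0 hW.1
    have hev : ∀ᶠ k in atTop, ℓ (gs k) ∈ {z : Z | ((0 : Z), z) ∈ W} :=
      hsummable.tendsto_atTop_zero.eventually_mem hball
    obtain ⟨k, hk⟩ := hev.exists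
    -- derive contradiction with hnw (ms k)
    apply hnw (ms k)
    have h1 : ((0 : Z) + ℓ (ff (ms k)), ℓ (gs k) + ℓ (ff (ms k))) ∈ W :=
      hW.2.2.1 _ hk (ℓ (ff (ms k)))
    rw [zero_add, add_comm] at h1
    rwa [hlin_add _ (hff (ms k)).1 _ (hgf (ms k)).1]
  · -- uniform continuity and relative completeness on each FB
    intro B hB
    constructor
    · intro W hWu
      rw [uniformity_eq_comap_nhds_zero Z] at hWu
      obtain ⟨V, hV, hVW⟩ := Filter.mem_comap.mp hWu
      obtain ⟨T₀, hT₀, hT₀V⟩ := hcont 0 hRS.F_zero V (by rwa [hl0])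
      obtain ⟨T, hT, hTadd⟩ := hRS.T_add T₀ hT₀
      refine ⟨T, hT, ?_⟩
      intro f hf g hg hfg
      have hnf : -f ∈ ℱ := by
        have h := hFsmul (-1) f hf.1
        rwa [neg_one_smul] at h
      have h1 : (f + -f, g + -f) ∈ T₀ :=
        hTadd f g (-f) (-f) hfg (hRS.T_refl T hT _ hnf)
      rw [add_neg_cancel] at h1
      have h3 : ℓ (g + -f) ∈ V := hT₀V _ (hRS.F_add g hg.1 (-f) hnf) h1
      have hneg : ℓ (-f) = -ℓ f := by
        have h := hlin_smul (-1) f hf.1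
        rwa [neg_one_smul, neg_one_smul] at h
      rw [hlin_add g hg.1 (-f) hnf, hneg, ← sub_eq_add_neg] at h3
      exact hVW h3
    · exact (hZbd _ (himgbd B hB)).1
end

section
/- Let ℜ = (S,(𝒦,𝒢),(X,ℬ),(ℱ,𝒯)) be a Riesz system, Z a uniform commutative monoid, and ℓ : ℱ → Z a Riesz integral over ℜ. Then for every B∈ℬ and W∈unif Z: (i) for every γ∈𝒢 there exists κ'∈𝒦 with κ'⊆γ and γ∖κ' ∈ S(W,B,ℓ); and (ii) for every κ∈𝒦 there exists γ'∈𝒢 with κ⊆γ' and γ'∖κ ∈ S(W,B,ℓ). -/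
open Filter Set Topology
open scoped Pointwise

universe u v w

theorem stmt13 {S : Type u} {X : Type v} {Z : Type w}
    [AddCommMonoid X] [UniformSpace X] [T2Space X]
    [AddCommMonoid Z] [UniformSpace Z] [T2Space Z]
    (hZadd : UniformContinuous fun p : Z × Z => p.1 + p.2)
    {𝒦 𝒢 : Set (Set S)} {ℬ : Set (Set X)} {ℱ : Set (S → X)}
    {𝒯 : Filter ((S → X) × (S → X))}
    (hRS : RieszSystem 𝒦 𝒢 ℬ ℱ 𝒯)
    (ℓ : (S → X) → Z) (hℓ : RieszIntegral 𝒦 𝒢 ℬ ℱ 𝒯 ℓ) :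
    ∀ B ∈ ℬ, ∀ W : Set (Z × Z), IsUnifEnt Z W →
      (∀ γ ∈ 𝒢, ∃ κ' ∈ 𝒦, κ' ⊆ γ ∧ (γ \ κ') ∈ SWB 𝒦 𝒢 ℱ ℓ W B) ∧
      ∀ κ ∈ 𝒦, ∃ γ' ∈ 𝒢, κ ⊆ γ' ∧ (γ' \ κ) ∈ SWB 𝒦 𝒢 ℱ ℓ W B := by
  classical
  intro B hB W hW
  obtain ⟨hEA, hSB, hUC⟩ := hℓ
  -- `univ ∈ 𝒢`
  have hunivG : (Set.univ : Set S) ∈ 𝒢 := by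
    obtain ⟨G, hG𝒢, hGcov, -⟩ := hRS.F_partble 0 hRS.F_zero Set.univ univ_mem
    have key : ∀ (G : Finset (Set S)), ↑G ⊆ 𝒢 → (⋃ γ ∈ G, γ) ∈ 𝒢 := by
      intro G
      induction G using Finset.induction_on with
      | empty => intro _; simpa using hRS.G_empty
      | insert _ _ ha ih =>
        intro h
        rw [Finset.set_biUnion_insert]
        exact hRS.G_union _ (h (Finset.mem_insert_self _ _)) _
          (ih fun x hx => h (Finset.mem_insert_of_mem hx))
    rw [← hGcov]; exact key G hG𝒢
  constructor
  · -- part (i)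
    intro γ hγ
    by_contra hcon
    push_neg at hcon
    have step : ∀ κ ∈ 𝒦, κ ⊆ γ → ∃ G ∈ 𝒢, ∃ τ ∈ 𝒦, G ⊆ τ ∧ τ ⊆ γ \ κ ∧
        ∃ f ∈ FB ℱ B, ∃ g ∈ FB ℱ B, SupportedBy 𝒦 g G ∧ (ℓ f, ℓ (f + g)) ∉ W := by
      intro κ hκ hκγ
      have hdiffG : γ \ κ ∈ 𝒢 := (hRS.KG_diff κ hκ γ hγ).2
      have hnot := hcon κ hκ hκγ
      simp only [SWB, Set.mem_setOf_eq, not_and] at hnot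
      have hnot2 := hnot hdiffG
      push_neg at hnot2
      obtain ⟨f, hf, g, hg, hsupp, hW'⟩ := hnot2
      obtain ⟨σ, hσK, hσsub, hσ0⟩ := hsupp
      obtain ⟨γ', hγ', κ', hκ', hσγ', hγ'κ', hκ'γ⟩ :=
        hRS.KG_interpose σ hσK (γ \ κ) hdiffG hσsub
      exact ⟨γ', hγ', κ', hκ', hγ'κ', hκ'γ, f, hf, g, hg, ⟨σ, hσK, hσγ', hσ0⟩, hW'⟩
    choose! G hG τ hτ hGτ hτsub f hf g hg hsupp hW' using step
    set κs : ℕ → Set S := fun n => Nat.rec ∅ (fun _ κ => κ ∪ τ κ) n with hκsdef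
    have hκsucc : ∀ n, κs (n + 1) = κs n ∪ τ (κs n) := fun n => rfl
    have hinv : ∀ n, κs n ∈ 𝒦 ∧ κs n ⊆ γ := by
      intro n
      induction n with
      | zero => exact ⟨hRS.K_empty, Set.empty_subset γ⟩
      | succ n ih =>
        have hτK := hτ _ ih.1 ih.2
        have hτγ := hτsub _ ih.1 ih.2
        exact ⟨hRS.K_union _ ih.1 _ hτK,
          Set.union_subset ih.2 (hτγ.trans Set.diff_subset)⟩
    have hmono : Monotone κs :=
      monotone_nat_of_le_succ fun n => Set.subset_union_left
    set Gs : ℕ → Set S := fun n => G (κs n) with hGsdef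
    have hGn : ∀ n, Gs n ∈ 𝒢 := fun n => hG _ (hinv n).1 (hinv n).2
    have hGsub : ∀ n, Gs n ⊆ κs (n + 1) := fun n =>
      ((hGτ _ (hinv n).1 (hinv n).2).trans Set.subset_union_right)
    have hGdiff : ∀ n, Gs n ⊆ γ \ κs n := fun n =>
      (hGτ _ (hinv n).1 (hinv n).2).trans (hτsub _ (hinv n).1 (hinv n).2)
    have hdisj : ∀ m n, m ≠ n → Disjoint (Gs m) (Gs n) := by
      have key : ∀ m n, m < n → Disjoint (Gs m) (Gs n) := by
        intro m n hmn
        have h1 : Gs m ⊆ κs n := (hGsub m).trans (hmono (Nat.succ_le_of_lt hmn))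
        exact Set.disjoint_left.mpr fun x hx hx' => (hGdiff n hx').2 (h1 hx)
      intro m n hmn
      rcases lt_or_gt_of_ne hmn with h | h
      · exact key m n h
      · exact (key n m h).symm
    obtain ⟨m, hm⟩ := hSB B hB W hW Gs hGn hdisj
    have hn := hinv (m + 1)
    exact hW' _ hn.1 hn.2
      (hm (m + 1) (Nat.lt_succ_self m) _ (hf _ hn.1 hn.2) _ (hg _ hn.1 hn.2)
        (hsupp _ hn.1 hn.2))
  · -- part (ii)
    intro κ hκ
    by_contra hcon
    push_neg at hcon
    have step : ∀ δ ∈ 𝒢, κ ⊆ δ → ∃ G ∈ 𝒢, ∃ τ ∈ 𝒦, G ⊆ τ ∧ τ ⊆ δ \ κ ∧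
        ∃ f ∈ FB ℱ B, ∃ g ∈ FB ℱ B, SupportedBy 𝒦 g G ∧ (ℓ f, ℓ (f + g)) ∉ W := by
      intro δ hδ hκδ
      have hdiffG : δ \ κ ∈ 𝒢 := (hRS.KG_diff κ hκ δ hδ).2
      have hnot := hcon δ hδ hκδ
      simp only [SWB, Set.mem_setOf_eq, not_and] at hnot
      have hnot2 := hnot hdiffG
      push_neg at hnot2
      obtain ⟨f, hf, g, hg, hsupp, hW'⟩ := hnot2
      obtain ⟨σ, hσK, hσsub, hσ0⟩ := hsupp
      obtain ⟨γ', hγ', κ', hκ', hσγ', hγ'κ', hκ'γ⟩ :=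
        hRS.KG_interpose σ hσK (δ \ κ) hdiffG hσsub
      exact ⟨γ', hγ', κ', hκ', hγ'κ', hκ'γ, f, hf, g, hg, ⟨σ, hσK, hσγ', hσ0⟩, hW'⟩
    choose! G hG τ hτ hGτ hτsub f hf g hg hsupp hW' using step
    set γs : ℕ → Set S := fun n => Nat.rec Set.univ (fun _ δ => δ \ τ δ) n with hγsdef
    have hγsucc : ∀ n, γs (n + 1) = γs n \ τ (γs n) := fun n => rfl
    have hinv : ∀ n, γs n ∈ 𝒢 ∧ κ ⊆ γs n := by
      intro n
      induction n with
      | zero => exact ⟨hunivG, Set.subset_univ κ⟩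
      | succ n ih =>
        have hτK := hτ _ ih.1 ih.2
        have hτδ := hτsub _ ih.1 ih.2
        refine ⟨(hRS.KG_diff _ hτK _ ih.1).2, fun x hx => ⟨ih.2 hx, fun hxτ => ?_⟩⟩
        exact (hτδ hxτ).2 hx
    have hanti : Antitone γs :=
      antitone_nat_of_succ_le fun n => Set.diff_subset
    set Gs : ℕ → Set S := fun n => G (γs n) with hGsdef
    have hGn : ∀ n, Gs n ∈ 𝒢 := fun n => hG _ (hinv n).1 (hinv n).2
    have hdisj : ∀ m n, m ≠ n → Disjoint (Gs m) (Gs n) := by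
      have key : ∀ m n, m < n → Disjoint (Gs m) (Gs n) := by
        intro m n hmn
        have h1 : Gs n ⊆ γs m \ τ (γs m) := by
          have : Gs n ⊆ γs n :=
            ((hGτ _ (hinv n).1 (hinv n).2).trans
              ((hτsub _ (hinv n).1 (hinv n).2).trans Set.diff_subset))
          exact this.trans (hanti (Nat.succ_le_of_lt hmn))
        have h2 : Gs m ⊆ τ (γs m) := hGτ _ (hinv m).1 (hinv m).2
        exact Set.disjoint_left.mpr fun x hx hx' => (h1 hx').2 (h2 hx)
      intro m n hmn
      rcases lt_or_gt_of_ne hmn with h | h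
      · exact key m n h
      · exact (key n m h).symm
    obtain ⟨m, hm⟩ := hSB B hB W hW Gs hGn hdisj
    have hn := hinv (m + 1)
    exact hW' _ hn.1 hn.2
      (hm (m + 1) (Nat.lt_succ_self m) _ (hf _ hn.1 hn.2) _ (hg _ hn.1 hn.2)
        (hsupp _ hn.1 hn.2))
end

section
/- Let ℜ = (S,(𝒦,𝒢),(X,ℬ),(ℱ,𝒯)) be a Riesz system, Z a uniform commutative monoid, and ℓ : ℱ → Z a Riesz integral over ℜ. If A,B∈ℬ are such that A+A⊆B, V₁,V₂∈unif Z, and γ_i ∈ S(V_i,B,ℓ) for i=1,2, then γ₁∪γ₂ ∈ S((V₁∘V₂)^cl, A, ℓ), where (V₁∘V₂)^cl denotes the closure of the relational composition V₁∘V₂ in the product topology of Z×Z. -/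
open Filter Set Topology
open scoped Pointwise

universe u v w

section Aux

variable {S : Type u} {X : Type v} {Z : Type w}

lemma supportedBy_mono [Zero X] {𝒦 : Set (Set S)} {f : S → X} {α β : Set S}
    (h : SupportedBy 𝒦 f α) (hs : α ⊆ β) : SupportedBy 𝒦 f β := by
  obtain ⟨κ, h1, h2, h3⟩ := h
  exact ⟨κ, h1, h2.trans hs, h3⟩

lemma supportedBy_add [AddCommMonoid X] {𝒦 : Set (Set S)}
    (hK : ∀ κ₁ ∈ 𝒦, ∀ κ₂ ∈ 𝒦, κ₁ ∪ κ₂ ∈ 𝒦)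
    {f g : S → X} {α : Set S}
    (hf : SupportedBy 𝒦 f α) (hg : SupportedBy 𝒦 g α) : SupportedBy 𝒦 (f + g) α := by
  obtain ⟨κ₁, hκ₁, hs₁, hv₁⟩ := hf
  obtain ⟨κ₂, hκ₂, hs₂, hv₂⟩ := hg
  refine ⟨κ₁ ∪ κ₂, hK κ₁ hκ₁ κ₂ hκ₂, Set.union_subset hs₁ hs₂, fun s hs => ?_⟩
  have h1 := hv₁ s (fun h => hs (Or.inl h))
  have h2 := hv₂ s (fun h => hs (Or.inr h))
  simp [Pi.add_apply, h1, h2]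

lemma fb_mono {ℱ : Set (S → X)} {B C : Set X} (h : B ⊆ C) : FB ℱ B ⊆ FB ℱ C :=
  fun _ hf => ⟨hf.1, hf.2.trans h⟩

lemma fb_add [AddCommMonoid X] {ℱ : Set (S → X)}
    (hadd : ∀ f ∈ ℱ, ∀ g ∈ ℱ, f + g ∈ ℱ) {B B' C : Set X} {f g : S → X}
    (hf : f ∈ FB ℱ B) (hg : g ∈ FB ℱ B') (h : B + B' ⊆ C) : f + g ∈ FB ℱ C := by
  refine ⟨hadd f hf.1 g hg.1, ?_⟩
  rw [Set.range_subset_iff]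
  intro s
  exact h (Set.add_mem_add (hf.2 (Set.mem_range_self s)) (hg.2 (Set.mem_range_self s)))

/-- Below every entourage of a uniform commutative monoid there is a closed,
translation-invariant, symmetric entourage. -/
lemma exists_isUnifEnt_subset [AddCommMonoid Z] [UniformSpace Z]
    (hZadd : UniformContinuous fun p : Z × Z => p.1 + p.2)
    {d : Set (Z × Z)} (hd : d ∈ uniformity Z) :
    ∃ W : Set (Z × Z), IsUnifEnt Z W ∧ W ⊆ d := by
  obtain ⟨d₁, ⟨hd₁, hd₁c⟩, hd₁d⟩ := uniformity_hasBasis_closed.mem_iff.1 hd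
  set d₂ : Set (Z × Z) := d₁ ∩ Prod.swap ⁻¹' d₁ with hd₂def
  have hd₂ : d₂ ∈ uniformity Z := Filter.inter_mem hd₁ (tendsto_swap_uniformity hd₁)
  have hd₂c : IsClosed d₂ := hd₁c.inter (hd₁c.preimage continuous_swap)
  have hd₂symm : ∀ p ∈ d₂, (Prod.snd p, Prod.fst p) ∈ d₂ := by
    rintro ⟨x, y⟩ ⟨h1, h2⟩; exact ⟨h2, h1⟩
  have hd₂sub : d₂ ⊆ d := fun p hp => hd₁d hp.1
  obtain ⟨u, hu, huprop⟩ :=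
    mem_uniformity_of_uniformContinuous_invariant (f := fun a b : Z => a + b) hZadd hd₂
  set W : Set (Z × Z) := {p : Z × Z | ∀ t : Z, (p.1 + t, p.2 + t) ∈ d₂} with hWdef
  have hcont : Continuous fun p : Z × Z => p.1 + p.2 := hZadd.continuous
  refine ⟨W, ⟨?_, ?_, ?_, ?_⟩, ?_⟩
  · refine Filter.mem_of_superset hu fun p hp t => ?_
    exact huprop p.1 p.2 t hp
  · have : W = ⋂ t : Z, (fun p : Z × Z => (p.1 + t, p.2 + t)) ⁻¹' d₂ := by
      ext p; simp [hWdef]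
    rw [this]
    refine isClosed_iInter fun t => hd₂c.preimage ?_
    have h1 : Continuous fun p : Z × Z => p.1 + t :=
      hcont.comp (continuous_fst.prodMk continuous_const)
    have h2 : Continuous fun p : Z × Z => p.2 + t :=
      hcont.comp (continuous_snd.prodMk continuous_const)
    exact h1.prodMk h2
  · intro p hp t t'
    have := hp (t + t')
    simpa [add_assoc] using this
  · intro p hp t
    exact hd₂symm _ (hp t)
  · intro p hp
    have := hp 0
    simpa using hd₂sub this

end Aux

theorem stmt15 {S : Type u} {X : Type v} {Z : Type w}
    [AddCommMonoid X] [UniformSpace X] [T2Space X]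
    [AddCommMonoid Z] [UniformSpace Z] [T2Space Z]
    (hZadd : UniformContinuous fun p : Z × Z => p.1 + p.2)
    {𝒦 𝒢 : Set (Set S)} {ℬ : Set (Set X)} {ℱ : Set (S → X)}
    {𝒯 : Filter ((S → X) × (S → X))}
    (hRS : RieszSystem 𝒦 𝒢 ℬ ℱ 𝒯)
    (ℓ : (S → X) → Z) (hℓ : RieszIntegral 𝒦 𝒢 ℬ ℱ 𝒯 ℓ)
    (A B : Set X) (hA : A ∈ ℬ) (hB : B ∈ ℬ) (hAB : A + A ⊆ B)
    (V₁ V₂ : Set (Z × Z)) (hV₁ : IsUnifEnt Z V₁) (hV₂ : IsUnifEnt Z V₂)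
    (γ₁ γ₂ : Set S) (h1 : γ₁ ∈ SWB 𝒦 𝒢 ℱ ℓ V₁ B) (h2 : γ₂ ∈ SWB 𝒦 𝒢 ℱ ℓ V₂ B) :
    γ₁ ∪ γ₂ ∈ SWB 𝒦 𝒢 ℱ ℓ (closure (SetRel.comp V₁ V₂)) A := by
  classical
  have hγ : γ₁ ∪ γ₂ ∈ 𝒢 := hRS.G_union γ₁ h1.1 γ₂ h2.1
  refine ⟨hγ, ?_⟩
  intro f hf g hg hsupp
  obtain ⟨κ, hκK, hκγ, hgv⟩ := hsupp
  -- basic facts about the ℬ-sets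
  have h0A : (0 : X) ∈ A := hRS.B_zero A hA
  have h0B : (0 : X) ∈ B := hRS.B_zero B hB
  have hAsB : A ⊆ B := fun a ha => by simpa using hAB (Set.add_mem_add ha h0A)
  obtain ⟨C, hC, hBBC⟩ := hRS.B_add B hB B hB
  have hBsC : B ⊆ C := fun b hb => by simpa using hBBC (Set.add_mem_add hb h0B)
  have hABC : A + B ⊆ C := by
    rintro z ⟨a, ha, b, hb, rfl⟩
    exact hBBC (Set.add_mem_add (hAsB ha) hb)
  have hBAC : B + A ⊆ C := by
    rintro z ⟨b, hb, a, ha, rfl⟩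
    exact hBBC (Set.add_mem_add hb (hAsB ha))
  have hfB : f ∈ FB ℱ B := ⟨hf.1, hf.2.trans hAsB⟩
  have hfgB : f + g ∈ FB ℱ B := fb_add hRS.F_add hf hg hAB
  have hfgC : f + g ∈ FB ℱ C := fb_mono hBsC hfgB
  -- the nested interposition sequence around κ inside γ₁ ∪ γ₂
  have hstep : ∀ ω : {ω : Set S // ω ∈ 𝒢 ∧ κ ⊆ ω},
      ∃ q : {ω' : Set S // ω' ∈ 𝒢 ∧ κ ⊆ ω'} × Set S,
        q.2 ∈ 𝒦 ∧ q.1.1 ⊆ q.2 ∧ q.2 ⊆ ω.1 := by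
    rintro ⟨ω, hω, hκω⟩
    obtain ⟨γ', hγ', κ', hκ', hh1, hh2, hh3⟩ := hRS.KG_interpose κ hκK ω hω hκω
    exact ⟨⟨⟨γ', hγ', hh1⟩, κ'⟩, hκ', hh2, hh3⟩
  choose stepf hstepK hstep1 hstep2 using hstep
  let ωs : ℕ → {ω : Set S // ω ∈ 𝒢 ∧ κ ⊆ ω} := fun n =>
    Nat.rec ⟨γ₁ ∪ γ₂, hγ, hκγ⟩ (fun _ ih => (stepf ih).1) n
  let κs : ℕ → Set S := fun n => (stepf (ωs n)).2
  have hωsucc : ∀ n, (ωs (n + 1)).1 ⊆ κs n := fun n => hstep1 (ωs n)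
  have hκsub : ∀ n, κs n ⊆ (ωs n).1 := fun n => hstep2 (ωs n)
  have hκsK : ∀ n, κs n ∈ 𝒦 := fun n => hstepK (ωs n)
  have hdec : ∀ n, (ωs (n + 1)).1 ⊆ (ωs n).1 := fun n => (hωsucc n).trans (hκsub n)
  have hmono : ∀ m n, m ≤ n → (ωs n).1 ⊆ (ωs m).1 := by
    intro m n h
    induction h with
    | refl => exact subset_rfl
    | step h ih => exact (hdec _).trans ih
  -- the disjoint sequence of collars
  let Gs : ℕ → Set S := fun j => (ωs (2 * j)).1 \ κs (2 * j + 1)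
  have hGs𝒢 : ∀ j, Gs j ∈ 𝒢 := fun j =>
    (hRS.KG_diff (κs (2 * j + 1)) (hκsK (2 * j + 1)) (ωs (2 * j)).1 (ωs (2 * j)).2.1).2
  have hGdisj' : ∀ j j', j < j' → Disjoint (Gs j) (Gs j') := by
    intro j j' hjj'
    rw [Set.disjoint_left]
    intro x hxj hxj'
    have hsub : (ωs (2 * j')).1 ⊆ (ωs (2 * j + 1 + 1)).1 := hmono (2 * j + 1 + 1) (2 * j') (by omega)
    exact hxj.2 (hωsucc (2 * j + 1) (hsub hxj'.1))
  have hGdisj : ∀ j j', j ≠ j' → Disjoint (Gs j) (Gs j') := by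
    intro j j' hne
    rcases lt_or_gt_of_ne hne with h | h
    · exact hGdisj' j j' h
    · exact (hGdisj' j' j h).symm
  -- reduce to finding, for each entourage d, a point of V₁ ∘ V₂ d-close to the target
  rw [closure_eq_inter_uniformity]
  refine Set.mem_iInter₂.2 fun d hd => ?_
  obtain ⟨t, ht, ht3⟩ := comp3_mem_uniformity hd
  obtain ⟨W, hW, hWt⟩ := exists_isUnifEnt_subset hZadd ht
  obtain ⟨T, hT, hTp⟩ := (hℓ.2.2 C hC).1 W hW.1
  obtain ⟨T', hT', hT'p⟩ := hRS.T_add T hT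
  obtain ⟨U, hU, hUp⟩ := hRS.F_ext A hA T' hT'
  obtain ⟨m, hm⟩ := hℓ.2.1 C hC W hW Gs hGs𝒢 hGdisj
  let i := m + 1
  let a0 : Set S := (ωs (2 * i)).1
  let a1 : Set S := (ωs (2 * i + 1)).1
  let k0 : Set S := κs (2 * i)
  let k1 : Set S := κs (2 * i + 1)
  have ha0𝒢 : a0 ∈ 𝒢 := (ωs (2 * i)).2.1
  have ha1𝒢 : a1 ∈ 𝒢 := (ωs (2 * i + 1)).2.1
  have hk0K : k0 ∈ 𝒦 := hκsK (2 * i)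
  have hk1K : k1 ∈ 𝒦 := hκsK (2 * i + 1)
  have ha1k0 : a1 ⊆ k0 := hωsucc (2 * i)
  have hk0a0 : k0 ⊆ a0 := hκsub (2 * i)
  have hk1a1 : k1 ⊆ a1 := hκsub (2 * i + 1)
  have hκa0 : κ ⊆ a0 := (ωs (2 * i)).2.2
  have ha0γ : a0 ⊆ γ₁ ∪ γ₂ := hmono 0 (2 * i) (Nat.zero_le _)
  have ha1a0 : a1 ⊆ a0 := ha1k0.trans hk0a0
  have hk1a0 : k1 ⊆ a0 := hk1a1.trans ha1a0
  have hGsi : Gs i = a0 \ k1 := rfl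
  -- split γ₁-core of k0
  have hk0γ₂K : k0 \ γ₂ ∈ 𝒦 := (hRS.KG_diff k0 hk0K γ₂ h2.1).1
  have hk0γ₂γ₁ : k0 \ γ₂ ⊆ γ₁ := by
    intro x hx
    rcases ha0γ (hk0a0 hx.1) with h | h
    · exact h
    · exact absurd h hx.2
  obtain ⟨ρ₁, hρ𝒢, κρ, hκρK, hρ1, hρ2, hρ3⟩ :=
    hRS.KG_interpose (k0 \ γ₂) hk0γ₂K γ₁ h1.1 hk0γ₂γ₁
  have hργ₁ : ρ₁ ⊆ γ₁ := hρ2.trans hρ3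
  let δ₁ : Set S := a0 ∩ ρ₁
  let δ₂ : Set S := a0 ∩ γ₂
  have hδ₁𝒢 : δ₁ ∈ 𝒢 := hRS.G_inter a0 ha0𝒢 ρ₁ hρ𝒢
  have hδ₂𝒢 : δ₂ ∈ 𝒢 := hRS.G_inter a0 ha0𝒢 γ₂ h2.1
  have hδ₁γ₁ : δ₁ ⊆ γ₁ := fun x hx => hργ₁ hx.2
  have hδ₂γ₂ : δ₂ ⊆ γ₂ := fun x hx => hx.2
  have hδ₁a0 : δ₁ ⊆ a0 := Set.inter_subset_left
  have hδ₂a0 : δ₂ ⊆ a0 := Set.inter_subset_left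
  have hcover : k0 ⊆ δ₁ ∪ δ₂ := by
    intro x hx
    by_cases hxγ₂ : x ∈ γ₂
    · exact Or.inr ⟨hk0a0 hx, hxγ₂⟩
    · exact Or.inl ⟨hk0a0 hx, hρ1 ⟨hx, hxγ₂⟩⟩
  -- the partition g = g₁ + g₂ near k0
  have key : ∃ g₁ g₂ : S → X, g₁ ∈ FB ℱ A ∧ g₂ ∈ FB ℱ A ∧ g₁ + g₂ ∈ FB ℱ A ∧
      SupportedBy 𝒦 g₁ δ₁ ∧ SupportedBy 𝒦 g₂ δ₂ ∧ ∀ s ∈ k0, g s = g₁ s + g₂ s := by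
    by_cases hδeq : δ₂ = δ₁
    · rw [hδeq, Set.union_self] at hcover
      obtain ⟨gg, hgg1, hgg2, hgg3⟩ := hRS.F_partunity A hA {δ₁}
        (by intro x hx; simp only [Finset.coe_singleton, Set.mem_singleton_iff] at hx
            subst hx; exact hδ₁𝒢)
        k0 hk0K (by simpa using hcover) g hg
      have hA₁ := hgg1 δ₁ (Finset.mem_singleton_self δ₁)
      refine ⟨gg δ₁, 0, hA₁.1, ⟨hRS.F_zero, ?_⟩, ?_, hA₁.2,
        ⟨∅, hRS.K_empty, Set.empty_subset _, fun s _ => rfl⟩, ?_⟩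
      · rw [Set.range_subset_iff]; intro s; exact h0A
      · rw [add_zero]; exact hA₁.1
      · intro s hs
        have h := hgg3 s hs
        simpa using h
    · have hδne : δ₁ ≠ δ₂ := fun h => hδeq h.symm
      obtain ⟨gg, hgg1, hgg2, hgg3⟩ := hRS.F_partunity A hA {δ₁, δ₂}
        (by intro x hx
            simp only [Finset.coe_insert, Finset.coe_singleton, Set.mem_insert_iff,
              Set.mem_singleton_iff] at hx
            rcases hx with rfl | rfl
            exacts [hδ₁𝒢, hδ₂𝒢])
        k0 hk0K (by simpa using hcover) g hg
      have hmem₁ : δ₁ ∈ ({δ₁, δ₂} : Finset (Set S)) := by simp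
      have hmem₂ : δ₂ ∈ ({δ₁, δ₂} : Finset (Set S)) := by simp
      refine ⟨gg δ₁, gg δ₂, (hgg1 δ₁ hmem₁).1, (hgg1 δ₂ hmem₂).1, ?_,
        (hgg1 δ₁ hmem₁).2, (hgg1 δ₂ hmem₂).2, ?_⟩
      · have h := hgg2 {δ₁, δ₂} (Finset.Subset.refl _)
        rwa [Finset.sum_pair hδne] at h
      · intro s hs
        have h := hgg3 s hs
        rwa [Finset.sum_pair hδne] at h
  obtain ⟨g₁, g₂, hg₁A, hg₂A, h12A, hg₁δ, hg₂δ, heq⟩ := key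
  -- apply F_ext to g and g₁ + g₂
  have hgsupa0 : SupportedBy 𝒦 g a0 := ⟨κ, hκK, hκa0, hgv⟩
  have h12supa0 : SupportedBy 𝒦 (g₁ + g₂) a0 :=
    supportedBy_add hRS.K_union (supportedBy_mono hg₁δ hδ₁a0) (supportedBy_mono hg₂δ hδ₂a0)
  obtain ⟨p, hpA, q, hqA, hpsup, hqsup, hpq⟩ :=
    hUp k1 hk1K a0 ha0𝒢 hk1a0 g hg (g₁ + g₂) h12A hgsupa0 h12supa0
      ⟨a1, ha1𝒢, hk1a1, ha1a0, fun s hs => by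
        have h : g s = (g₁ + g₂) s := heq s (ha1k0 hs)
        rw [h]; exact refl_mem_uniformity hU⟩
  -- s-bounded negligibility of the collar Gs i
  have hneg : ∀ f' ∈ FB ℱ C, ∀ g' ∈ FB ℱ C, SupportedBy 𝒦 g' (Gs i) →
      (ℓ f', ℓ (f' + g')) ∈ W :=
    fun f' hf' g' hg' hs => hm i (Nat.lt_succ_self m) f' hf' g' hg' hs
  -- the V₁ and V₂ steps
  have hg₁B : g₁ ∈ FB ℱ B := fb_mono hAsB hg₁A
  have hg₂B : g₂ ∈ FB ℱ B := fb_mono hAsB hg₂A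
  have hfg₁B : f + g₁ ∈ FB ℱ B := fb_add hRS.F_add hf hg₁A hAB
  have step1 : (ℓ f, ℓ (f + g₁)) ∈ V₁ :=
    h1.2 f hfB g₁ hg₁B (supportedBy_mono hg₁δ hδ₁γ₁)
  have step2 : (ℓ (f + g₁), ℓ (f + g₁ + g₂)) ∈ V₂ :=
    h2.2 (f + g₁) hfg₁B g₂ hg₂B (supportedBy_mono hg₂δ hδ₂γ₂)
  -- the three W-steps
  have hfg12C : f + g₁ + g₂ ∈ FB ℱ C := fb_add hRS.F_add hfg₁B hg₂A hBAC
  have hpC : p ∈ FB ℱ C := fb_mono (hAsB.trans hBsC) hpA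
  have hqC : q ∈ FB ℱ C := fb_mono (hAsB.trans hBsC) hqA
  have hpsup' : SupportedBy 𝒦 p (Gs i) := by rw [hGsi]; exact hpsup
  have hqsup' : SupportedBy 𝒦 q (Gs i) := by rw [hGsi]; exact hqsup
  have stepq : (ℓ (f + g₁ + g₂), ℓ (f + g₁ + g₂ + q)) ∈ W :=
    hneg _ hfg12C q hqC hqsup'
  have stepp : (ℓ (f + g), ℓ (f + g + p)) ∈ W :=
    hneg _ hfgC p hpC hpsup'
  have hgpB : g + p ∈ FB ℱ B := fb_add hRS.F_add hg hpA hAB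
  have h12qB : g₁ + g₂ + q ∈ FB ℱ B := fb_add hRS.F_add h12A hqA hAB
  have hfgpC : f + (g + p) ∈ FB ℱ C := fb_add hRS.F_add hf hgpB hABC
  have hf12qC : f + (g₁ + g₂ + q) ∈ FB ℱ C := fb_add hRS.F_add hf h12qB hABC
  have hTpair : (f + (g + p), f + (g₁ + g₂ + q)) ∈ T :=
    hT'p f f (g + p) (g₁ + g₂ + q) (hRS.T_refl T' hT' f hf.1) hpq
  have stepW : (ℓ (f + (g + p)), ℓ (f + (g₁ + g₂ + q))) ∈ W :=
    hTp _ hfgpC _ hf12qC hTpair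
  have e1 : f + (g + p) = f + g + p := (add_assoc f g p).symm
  have e2 : f + (g₁ + g₂ + q) = f + g₁ + g₂ + q := by
    rw [← add_assoc, ← add_assoc]
  rw [e1, e2] at stepW
  -- assemble
  have hWsymm := hW.2.2.2
  have hchain : (ℓ (f + g₁ + g₂), ℓ (f + g)) ∈ SetRel.comp W (SetRel.comp W W) :=
    ⟨ℓ (f + g₁ + g₂ + q), stepq, ℓ (f + g + p), hWsymm _ stepW, hWsymm _ stepp⟩
  exact ⟨ℓ f, refl_mem_uniformity hd, ℓ (f + g₁ + g₂),
    ⟨ℓ (f + g₁), step1, step2⟩,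
    ht3 (SetRel.comp_subset_comp hWt (SetRel.comp_subset_comp hWt hWt) hchain)⟩
end
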